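/- For the Taft algebra (n = 1) and its two-dimensional simple D(T_ℓ)-module 𝒜̄_{(i-1)ε₁, iε₁} with basis {K(iε₁), x₁K((i-1)ε₁)}, the braiding R-matrix (the composition of the flip with the action of the canonical R-matrix of the double) is given in this basis by the 4×4 matrix with rows (q^{i(i-1)},0,0,0), (0, q^{i(i-1)}(1-q), q^{i²}, 0), (0, q^{(i-1)²}, 0, 0), (0,0,0, q^{i(i-1)}); in particular for ℓ odd and i = (ℓ+1)/2 its minimal polynomial is (x - q^{-1/4})(x + q^{3/4}) where q^{1/4} := q^{(ℓ+1)²/4}. -/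

import Mathlib

open scoped TensorProduct

def starForm {n : ℕ} (α β : Fin n → ℤ) : ℤ :=
  ∑ j : Fin n, ∑ i : Fin n, if (j : ℕ) < (i : ℕ) then α i * β j else 0

noncomputable def theta {k : Type*} [Field k] (q : k) {n : ℕ} (α β : Fin n → ℤ) : k :=
  q ^ (starForm α β - starForm β α)

def epsZ {n : ℕ} (i : Fin n) : Fin n → ℤ := fun j => if j = i then 1 else 0

/-- The ordered monomial `x^γ = x_1^{γ_1} ⋯ x_n^{γ_n}` built from a family `x`. -/
def xpow {A : Type*} [Ring A] {n : ℕ} (x : Fin n → A) (γ : Fin n → ℕ) : A :=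
  ((List.finRange n).map (fun i => x i ^ γ i)).prod

/-- A presentation of the `n`-rank Taft algebra inside a Hopf algebra `A`
(generators `K(α)`, `x_i` and the defining relations, together with the values of
the comultiplication, counit and antipode on the generators).  The scalar `t`
is the parameter used in the skew bicharacter `θ`: for the `n`-rank Taft algebra
`𝒜̄_q(n)` one takes `t = q`, while `t = 1` gives the presentation of the `n`-fold
tensor power of the Taft algebra (the rank-`n` Taft algebra `𝒜̄_q(1)^{⊗n}`). -/
structure TaftPresentation (k : Type*) [Field k] (A : Type*) [Ring A]
    [HopfAlgebra k A] (n ℓ : ℕ) (q t : k) where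
  K : (Fin n → ℤ) → A
  x : Fin n → A
  K_zero : K 0 = 1
  K_add : ∀ α β, K α * K β = K (α + β)
  K_ell : ∀ i, K (epsZ i) ^ ℓ = 1
  K_x : ∀ i j, K (epsZ i) * x j
      = (theta t (epsZ i) (epsZ j) * if i = j then q else 1) • (x j * K (epsZ i))
  x_x : ∀ i j, x i * x j = theta t (epsZ i) (epsZ j) • (x j * x i)
  x_ell : ∀ i, x i ^ ℓ = 0
  comul_K : ∀ α, Coalgebra.comul (R := k) (K α) = K α ⊗ₜ[k] K α
  comul_x : ∀ i, Coalgebra.comul (R := k) (x i) = x i ⊗ₜ[k] 1 + K (epsZ i) ⊗ₜ[k] x i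
  counit_K : ∀ α, Coalgebra.counit (R := k) (K α) = 1
  counit_x : ∀ i, Coalgebra.counit (R := k) (x i) = 0
  antipode_K : ∀ α, HopfAlgebra.antipode (R := k) (K α) = K (-α)
  antipode_x : ∀ i, HopfAlgebra.antipode (R := k) (x i) = -(K (-epsZ i) * x i)

namespace TaftPresentation

variable {k : Type*} [Field k] {A : Type*} [Ring A] [HopfAlgebra k A]
  {n ℓ : ℕ} {q t : k}

/-- The basis monomial `x^γ K(α)`. -/
def mono (T : TaftPresentation k A n ℓ q t) (γ α : Fin n → Fin ℓ) : A :=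
  xpow T.x (fun i => (γ i : ℕ)) * T.K (fun i => (α i : ℤ))

end TaftPresentation

def tildeMap {n : ℕ} (β : Fin n → ℤ) : Fin n → ℤ := fun i =>
  if (i : ℕ) + 1 = n then ∑ j, β j
  else (∑ j : Fin n, if (j : ℕ) ≤ (i : ℕ) then β j else 0)
        - (∑ j : Fin n, if (i : ℕ) < (j : ℕ) then β j else 0)

variable {k : Type*} [Field k] {A : Type*} [Ring A] [HopfAlgebra k A]

/-- The functional `κ(α) ∈ 𝒜̄_q(n)*`, `κ(α)(x^γ K(β)) = δ_{γ,0} q^{⟨α,β⟩}`. -/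
noncomputable def kappaD {n ℓ : ℕ} {q t : k} (T : TaftPresentation k A n ℓ q t)
    (b : Module.Basis ((Fin n → Fin ℓ) × (Fin n → Fin ℓ)) k A) (α : Fin n → ℕ) :
    Module.Dual k A :=
  b.constr k (fun p =>
    if ∀ j, (p.1 j : ℕ) = 0 then q ^ (∑ i, α i * (p.2 i : ℕ)) else 0)

/-- The map `h ↦ s⁻¹(h₍₁₎) ⊗ χ(h₍₂₎) h₍₃₎`. -/
noncomputable def bulletAux (sInv : A →ₗ[k] A) (χ : Module.Dual k A) :
    A →ₗ[k] A ⊗[k] A :=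
  (TensorProduct.map sInv
      ((TensorProduct.lid k A).toLinearMap ∘ₗ TensorProduct.map χ LinearMap.id)) ∘ₗ
    (TensorProduct.map LinearMap.id (Coalgebra.comul (R := k))) ∘ₗ
      Coalgebra.comul (R := k)

/-- The bilinear collapse `(u ⊗ v) ↦ v * a * u`. -/
noncomputable def collapseMul (a : A) : A ⊗[k] A →ₗ[k] A :=
  TensorProduct.lift (LinearMap.mk₂ k (fun u v => v * a * u)
    (by intro m₁ m₂ n; simp [mul_add])
    (by intro c m n; simp [mul_smul_comm])
    (by intro m n₁ n₂; simp [add_mul])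
    (by intro c m n; simp [smul_mul_assoc]))

/-- The left Yetter–Drinfel'd action `h •_χ a = χ(h₍₂₎) h₍₃₎ a s⁻¹(h₍₁₎)`,
as a linear map in `h` for fixed `a`. -/
noncomputable def bulletAt (sInv : A →ₗ[k] A) (χ : Module.Dual k A) (a : A) :
    A →ₗ[k] A :=
  collapseMul a ∘ₗ bulletAux sInv χ

/-- The action `h ⊗ a ↦ h • a` as a linear map on the tensor square. -/
noncomputable def bulletT (sInv : A →ₗ[k] A) (χ : Module.Dual k A) :
    A ⊗[k] A →ₗ[k] A :=
  LinearMap.mul' k A ∘ₗ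
    TensorProduct.map LinearMap.id (LinearMap.mul' k A) ∘ₗ
      TensorProduct.map LinearMap.id (TensorProduct.comm k A A).toLinearMap ∘ₗ
        (TensorProduct.assoc k A A A).toLinearMap ∘ₗ
          TensorProduct.map (TensorProduct.comm k A A).toLinearMap LinearMap.id ∘ₗ
            TensorProduct.map (bulletAux sInv χ) LinearMap.id

/-- The braiding `R`-matrix `R_M(m ⊗ n) = n₍₀₎ ⊗ (n₍₁₎ • m)` of the simple
Yetter–Drinfel'd module, coming from the canonical `R`-matrix of the double. -/
noncomputable def RMat (sInv : A →ₗ[k] A) (χ : Module.Dual k A) :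
    A ⊗[k] A →ₗ[k] A ⊗[k] A :=
  TensorProduct.map LinearMap.id (bulletT sInv χ) ∘ₗ
    (TensorProduct.assoc k A A A).toLinearMap ∘ₗ
      TensorProduct.map (Coalgebra.comul (R := k)) LinearMap.id ∘ₗ
        (TensorProduct.comm k A A).toLinearMap

namespace Stmt17Aux

variable {k : Type*} [Field k] {A : Type*} [Ring A] [HopfAlgebra k A]
variable {ℓ : ℕ} {q : k}

/-- `K` of a constant function on `Fin 1`. -/
noncomputable def Km (T : TaftPresentation k A 1 ℓ q q) (m : ℤ) : A := T.K (fun _ => m)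

noncomputable def xg (T : TaftPresentation k A 1 ℓ q q) : A := T.x 0

variable (T : TaftPresentation k A 1 ℓ q q)

lemma eps0 : epsZ (0 : Fin 1) = fun _ => (1:ℤ) := by
  funext j; simp [epsZ, Subsingleton.elim j 0]

lemma Km_mul (a b : ℤ) : Km T a * Km T b = Km T (a + b) := T.K_add _ _

lemma Km_zero : Km T 0 = 1 := T.K_zero

lemma theta_eps : theta q (epsZ (0 : Fin 1)) (epsZ (0 : Fin 1)) = 1 := by
  simp [theta, starForm]

lemma gx : Km T 1 * xg T = q • (xg T * Km T 1) := by
  have h := T.K_x 0 0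
  rw [theta_eps, if_pos rfl, one_mul] at h
  rw [Km, xg, ← eps0]; exact h

end Stmt17Aux
namespace Stmt17Aux
variable {k : Type*} [Field k] {A : Type*} [Ring A] [HopfAlgebra k A]
variable {ℓ : ℕ} {q : k} (T : TaftPresentation k A 1 ℓ q q)

lemma Kx_comm (m : ℕ) : Km T m * xg T = q ^ m • (xg T * Km T m) := by
  induction m with
  | zero => simp [Km_zero]
  | succ n ih =>
    have h1 : Km T (n+1 : ℕ) = Km T n * Km T 1 := by
      rw [Km_mul]; norm_num
    calc Km T (n+1:ℕ) * xg T = Km T n * (Km T 1 * xg T) := by rw [h1, mul_assoc]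
      _ = q • (Km T n * xg T * Km T 1) := by rw [gx, mul_smul_comm, mul_assoc]
      _ = q • (q ^ n • (xg T * Km T n * Km T 1)) := by rw [ih, smul_mul_assoc]
      _ = q ^ (n+1) • (xg T * Km T (n+1:ℕ)) := by
          rw [smul_smul, ← pow_succ', mul_assoc, Km_mul]; norm_num

lemma xK_comm_neg (m : ℕ) : xg T * Km T (-m) = q ^ m • (Km T (-m) * xg T) := by
  have h := congrArg (fun z => Km T (-m) * z * Km T (-m)) (Kx_comm T m)
  simp only [mul_smul_comm, smul_mul_assoc] at h
  calc xg T * Km T (-m) = Km T (-m) * (Km T m * xg T) * Km T (-m) := by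
        rw [← mul_assoc, Km_mul, neg_add_cancel, Km_zero, one_mul]
    _ = q ^ m • (Km T (-m) * (xg T * Km T m) * Km T (-m)) := h
    _ = q ^ m • (Km T (-m) * (xg T * (Km T m * Km T (-m)))) := by
        rw [mul_assoc, mul_assoc]
    _ = q ^ m • (Km T (-m) * xg T) := by
        rw [Km_mul, add_neg_cancel, Km_zero, mul_one]

lemma Km_one_pow (m : ℕ) : Km T 1 ^ m = Km T m := by
  induction m with
  | zero => simp [Km_zero]
  | succ n ih => rw [pow_succ, ih, Km_mul]; norm_num

lemma Km_ell : Km T ℓ = 1 := by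
  rw [← Km_one_pow]
  have h := T.K_ell 0
  rw [eps0] at h
  exact h

lemma Km_mul_ell (d : ℕ) : Km T (ℓ * d : ℕ) = 1 := by
  induction d with
  | zero => simp [Km_zero]
  | succ n ih =>
    have : ((ℓ * (n+1) : ℕ) : ℤ) = (ℓ * n : ℕ) + (ℓ : ℕ) := by push_cast; ring
    rw [this, ← Km_mul, ih, one_mul, Km_ell]

lemma Km_mod (m : ℕ) : Km T m = Km T ((m % ℓ : ℕ) : ℤ) := by
  have h : (m : ℤ) = ((ℓ * (m / ℓ) : ℕ) : ℤ) + ((m % ℓ : ℕ) : ℤ) := by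
    rw [← Nat.cast_add, Nat.div_add_mod]
  rw [h, ← Km_mul, Km_mul_ell, one_mul]

end Stmt17Aux
namespace Stmt17Aux
variable {k : Type*} [Field k] {A : Type*} [Ring A] [HopfAlgebra k A]
variable {ℓ : ℕ} {q : k} (T : TaftPresentation k A 1 ℓ q q)

lemma comul_Km (m : ℤ) : Coalgebra.comul (R := k) (Km T m) = Km T m ⊗ₜ[k] Km T m :=
  T.comul_K _

lemma comul_xg : Coalgebra.comul (R := k) (xg T) = xg T ⊗ₜ[k] 1 + Km T 1 ⊗ₜ[k] xg T := by
  have h := T.comul_x 0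
  rw [eps0] at h
  exact h

lemma comul_xK (m : ℤ) : Coalgebra.comul (R := k) (xg T * Km T m)
    = (xg T * Km T m) ⊗ₜ[k] Km T m + Km T (m+1) ⊗ₜ[k] (xg T * Km T m) := by
  rw [Bialgebra.comul_mul, comul_xg, comul_Km, add_mul,
    Algebra.TensorProduct.tmul_mul_tmul, Algebra.TensorProduct.tmul_mul_tmul,
    one_mul, Km_mul, add_comm (1:ℤ) m]

lemma counit_Km (m : ℤ) : Coalgebra.counit (R := k) (Km T m) = 1 := T.counit_K _

lemma counit_xK (m : ℤ) : Coalgebra.counit (R := k) (xg T * Km T m) = 0 := by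
  rw [Bialgebra.counit_mul, xg, T.counit_x, zero_mul]

lemma antipode_Km (m : ℤ) : HopfAlgebra.antipode (R := k) (Km T m) = Km T (-m) :=
  T.antipode_K _

variable {sInv : A →ₗ[k] A}

lemma sInv_Km (hsInv : ∀ a : A, sInv (HopfAlgebra.antipode (R := k) a) = a ∧
      HopfAlgebra.antipode (R := k) (sInv a) = a) (m : ℤ) :
    sInv (Km T m) = Km T (-m) := by
  have h := (hsInv (Km T (-m))).1
  rw [antipode_Km, neg_neg] at h
  exact h

lemma antipode_xK (m : ℤ) :
    HopfAlgebra.antipode (R := k) (xg T * Km T m) = -(Km T (-(m+1)) * xg T) := by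
  have h := HopfAlgebra.mul_antipode_rTensor_comul_apply (R := k) (xg T * Km T m)
  rw [comul_xK, counit_xK, map_zero, map_add, LinearMap.rTensor_tmul,
    LinearMap.rTensor_tmul, map_add, LinearMap.mul'_apply, LinearMap.mul'_apply,
    antipode_Km] at h
  have h2 := congrArg (fun z => z * Km T (-m)) h
  simp only [add_mul, zero_mul, mul_assoc] at h2
  rw [Km_mul, add_neg_cancel, Km_zero, mul_one, mul_one] at h2
  exact eq_neg_of_add_eq_zero_left h2

lemma sInv_Kx (hsInv : ∀ a : A, sInv (HopfAlgebra.antipode (R := k) a) = a ∧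
      HopfAlgebra.antipode (R := k) (sInv a) = a) (m : ℤ) :
    sInv (Km T m * xg T) = -(xg T * Km T (-m-1)) := by
  have h := (hsInv (xg T * Km T (-m-1))).1
  rw [antipode_xK] at h
  have hm : -(-m-1+1) = m := by ring
  rw [hm, map_neg] at h
  -- h : -(sInv (Km T m * xg T)) = xg T * Km T (-m-1)
  rw [← h, neg_neg]
end Stmt17Aux
namespace Stmt17Aux
variable {k : Type*} [Field k] {A : Type*} [Ring A] [HopfAlgebra k A]
variable {ℓ : ℕ} {q : k} (T : TaftPresentation k A 1 ℓ q q)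
variable {sInv : A →ₗ[k] A}

lemma sInv_xK (hsInv : ∀ a : A, sInv (HopfAlgebra.antipode (R := k) a) = a ∧
      HopfAlgebra.antipode (R := k) (sInv a) = a) (hq1 : q ^ ℓ = 1)
    (m : ℕ) (hm : m ≤ ℓ) :
    sInv (xg T * Km T m) = -(q ^ (ℓ - m) • (xg T * Km T (-m-1))) := by
  have h1 : xg T * Km T m = q ^ (ℓ - m) • (Km T m * xg T) := by
    rw [Kx_comm, smul_smul, ← pow_add]
    have : ℓ - m + m = ℓ := by omega
    rw [this, hq1, one_smul]
  rw [h1, map_smul, sInv_Kx T hsInv, smul_neg]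

variable {b : Module.Basis ((Fin 1 → Fin ℓ) × (Fin 1 → Fin ℓ)) k A}

lemma xpow_zero' (hℓ : 1 < ℓ) :
    xpow T.x (fun i => (((fun _ => (⟨0, by omega⟩ : Fin ℓ)) : Fin 1 → Fin ℓ) i : ℕ)) = 1 := by
  simp [xpow, List.finRange]

lemma chi_K (hb : ∀ p, b p = T.mono p.1 p.2) (hℓ : 1 < ℓ) (hq1 : q ^ ℓ = 1) (c m : ℕ) :
    kappaD T b (fun _ => c) (Km T m) = q ^ (c * m) := by
  rw [Km_mod]
  set r : Fin ℓ := ⟨m % ℓ, Nat.mod_lt _ (by omega)⟩ with hr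
  have hbr := hb ((fun _ => (⟨0, by omega⟩ : Fin ℓ)), (fun _ => r))
  have hmono : T.mono (fun _ => (⟨0, by omega⟩ : Fin ℓ)) (fun _ => r)
      = Km T ((m % ℓ : ℕ) : ℤ) := by
    rw [TaftPresentation.mono, xpow_zero' T hℓ, one_mul]
    rfl
  rw [← hmono, ← hbr, kappaD, Module.Basis.constr_basis]
  rw [if_pos (fun j => rfl : ∀ j : Fin 1,
    ((((fun _ => (⟨0, by omega⟩ : Fin ℓ)) : Fin 1 → Fin ℓ), (fun _ => r)).1 j : Fin ℓ).val = 0)]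
  have h1 : (∑ i : Fin 1, c * ((fun _ => r) i : Fin ℓ).val) = c * (m % ℓ) := by
    simp [hr]
  rw [h1]
  have h2 : c * m = ℓ * (c * (m/ℓ)) + c * (m % ℓ) := by
    conv_lhs => rw [← Nat.div_add_mod m ℓ]
    ring
  rw [h2, pow_add, pow_mul q ℓ, hq1, one_pow, one_mul]

lemma chi_xK (hb : ∀ p, b p = T.mono p.1 p.2) (hℓ : 1 < ℓ) (c m : ℕ) :
    kappaD T b (fun _ => c) (xg T * Km T m) = 0 := by
  rw [Km_mod]
  set r : Fin ℓ := ⟨m % ℓ, Nat.mod_lt _ (by omega)⟩ with hr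
  have hbr := hb ((fun _ => (⟨1, hℓ⟩ : Fin ℓ)), (fun _ => r))
  have hmono : T.mono (fun _ => (⟨1, hℓ⟩ : Fin ℓ)) (fun _ => r)
      = xg T * Km T ((m % ℓ : ℕ) : ℤ) := by
    rw [TaftPresentation.mono]
    have : xpow T.x (fun i => (((fun _ => (⟨1, hℓ⟩ : Fin ℓ)) : Fin 1 → Fin ℓ) i : ℕ)) = xg T := by
      simp [xpow, List.finRange, xg]
    rw [this]
    rfl
  rw [← hmono, ← hbr, kappaD, Module.Basis.constr_basis]
  rw [if_neg]
  push_neg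
  exact ⟨0, by simp⟩

end Stmt17Aux
namespace Stmt17Aux
variable {k : Type*} [Field k] {A : Type*} [Ring A] [HopfAlgebra k A]
variable {ℓ : ℕ} {q : k} (T : TaftPresentation k A 1 ℓ q q)
variable {sInv : A →ₗ[k] A} {χ : Module.Dual k A}

lemma bulletT_K (hsInv : ∀ a : A, sInv (HopfAlgebra.antipode (R := k) a) = a ∧
      HopfAlgebra.antipode (R := k) (sInv a) = a) (m : ℤ) (a : A) :
    bulletT sInv χ (Km T m ⊗ₜ[k] a) = χ (Km T m) • (Km T m * a * Km T (-m)) := by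
  simp only [bulletT, bulletAux, LinearMap.comp_apply, TensorProduct.map_tmul,
    comul_Km, LinearMap.id_coe, id_eq, LinearEquiv.coe_coe, TensorProduct.lid_tmul,
    sInv_Km T hsInv, TensorProduct.comm_tmul, TensorProduct.assoc_tmul,
    LinearMap.mul'_apply, TensorProduct.smul_tmul', TensorProduct.tmul_smul,
    map_smul, smul_mul_assoc, mul_smul_comm, mul_assoc]

lemma bulletT_xK (hsInv : ∀ a : A, sInv (HopfAlgebra.antipode (R := k) a) = a ∧
      HopfAlgebra.antipode (R := k) (sInv a) = a) (m : ℤ) (a : A) :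
    bulletT sInv χ ((xg T * Km T m) ⊗ₜ[k] a)
      = χ (Km T m) • (Km T m * a * sInv (xg T * Km T m))
        + χ (xg T * Km T m) • (Km T m * a * Km T (-(m+1)))
        + χ (Km T (m+1)) • ((xg T * Km T m) * a * Km T (-(m+1))) := by
  simp only [bulletT, bulletAux, LinearMap.comp_apply, TensorProduct.map_tmul,
    comul_xK, comul_Km, map_add, TensorProduct.add_tmul, TensorProduct.tmul_add,
    LinearMap.id_coe, id_eq, LinearEquiv.coe_coe, TensorProduct.lid_tmul,
    sInv_Km T hsInv, TensorProduct.comm_tmul, TensorProduct.assoc_tmul,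
    LinearMap.mul'_apply, TensorProduct.smul_tmul', TensorProduct.tmul_smul,
    map_smul, smul_mul_assoc, mul_smul_comm, LinearMap.add_apply, mul_assoc, add_assoc]

end Stmt17Aux
namespace Stmt17Aux
variable {k : Type*} [Field k] {A : Type*} [Ring A] [HopfAlgebra k A]
variable {ℓ : ℕ} {q : k} (T : TaftPresentation k A 1 ℓ q q)
variable {sInv : A →ₗ[k] A} {χ : Module.Dual k A}

lemma RMat_K (m : ℤ) (a : A) :
    RMat sInv χ (a ⊗ₜ[k] Km T m) = Km T m ⊗ₜ[k] bulletT sInv χ (Km T m ⊗ₜ[k] a) := by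
  simp only [RMat, LinearMap.comp_apply, LinearEquiv.coe_coe, TensorProduct.comm_tmul,
    TensorProduct.map_tmul, comul_Km, TensorProduct.assoc_tmul, LinearMap.id_coe, id_eq]

lemma RMat_xK (m : ℤ) (a : A) :
    RMat sInv χ (a ⊗ₜ[k] (xg T * Km T m))
      = (xg T * Km T m) ⊗ₜ[k] bulletT sInv χ (Km T m ⊗ₜ[k] a)
        + Km T (m+1) ⊗ₜ[k] bulletT sInv χ ((xg T * Km T m) ⊗ₜ[k] a) := by
  simp only [RMat, LinearMap.comp_apply, LinearEquiv.coe_coe, TensorProduct.comm_tmul,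
    TensorProduct.map_tmul, comul_xK, TensorProduct.assoc_tmul, LinearMap.id_coe, id_eq,
    TensorProduct.add_tmul, map_add]

lemma KxK (a : ℕ) (b : ℤ) :
    Km T a * (xg T * Km T b) = q ^ a • (xg T * Km T (a + b)) := by
  rw [← mul_assoc, Kx_comm, smul_mul_assoc, mul_assoc, Km_mul]

lemma xKK (b c : ℤ) : (xg T * Km T b) * Km T c = xg T * Km T (b + c) := by
  rw [mul_assoc, Km_mul]

lemma xKxK (a : ℕ) (b : ℤ) :
    (xg T * Km T a) * (xg T * Km T b) = q ^ a • (xg T * xg T * Km T (a + b)) := by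
  rw [mul_assoc, ← mul_assoc (Km T (a:ℤ)), Kx_comm,
    smul_mul_assoc, mul_smul_comm, mul_assoc, Km_mul, ← mul_assoc]

end Stmt17Aux
namespace Stmt17Aux
variable {k : Type*} [Field k] {A : Type*} [Ring A] [HopfAlgebra k A]
variable {ℓ : ℕ} {q : k} (T : TaftPresentation k A 1 ℓ q q)
variable {sInv : A →ₗ[k] A} {b : Module.Basis ((Fin 1 → Fin ℓ) × (Fin 1 → Fin ℓ)) k A}

lemma qpow_shift (hq1 : q ^ ℓ = 1) (a c : ℕ) (h : a = ℓ + c) : q ^ a = q ^ c := by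
  rw [h, pow_add, hq1, one_mul]

lemma Km_def (m : ℤ) : T.K (fun _ => m) = Km T m := rfl

lemma xg_def : T.x 0 = xg T := rfl

lemma part1 (hq1 : q ^ ℓ = 1) (hℓ : 1 < ℓ)
    (hb : ∀ p, b p = T.mono p.1 p.2)
    (hsInv : ∀ a : A, sInv (HopfAlgebra.antipode (R := k) a) = a ∧
        HopfAlgebra.antipode (R := k) (sInv a) = a) :
    ∀ i : ℕ, 1 ≤ i → i ≤ ℓ →
      letI χ : Module.Dual k A := kappaD T b (fun _ => i - 1)
      letI R := RMat sInv χ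
      letI v1 : A := T.K (fun _ => (i : ℤ))
      letI v2 : A := T.x 0 * T.K (fun _ => (i : ℤ) - 1)
      R (v1 ⊗ₜ[k] v1) = q ^ (i * (i - 1)) • (v1 ⊗ₜ[k] v1) ∧
      R (v1 ⊗ₜ[k] v2) = q ^ ((i - 1) * (i - 1)) • (v2 ⊗ₜ[k] v1)
          + (q ^ (i * (i - 1)) - q ^ (i * (i - 1) + 1)) • (v1 ⊗ₜ[k] v2) ∧
      R (v2 ⊗ₜ[k] v1) = q ^ (i * i) • (v1 ⊗ₜ[k] v2) ∧
      R (v2 ⊗ₜ[k] v2) = q ^ (i * (i - 1)) • (v2 ⊗ₜ[k] v2) := by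
  intro i h1 h2
  obtain ⟨j, rfl⟩ : ∃ j, i = j + 1 := ⟨i - 1, by omega⟩
  have hj : j ≤ ℓ := by omega
  simp only [Nat.add_sub_cancel, Km_def, xg_def,
    show ((j+1:ℕ):ℤ) - 1 = ((j:ℕ):ℤ) by push_cast; ring]
  set χ : Module.Dual k A := kappaD T b (fun _ => j) with hχ
  have cK : ∀ m : ℕ, χ (Km T m) = q ^ (j * m) := fun m => chi_K T hb hℓ hq1 j m
  have cxK : ∀ m : ℕ, χ (xg T * Km T m) = 0 := fun m => chi_xK T hb hℓ j m
  refine ⟨?_, ?_, ?_, ?_⟩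
  · -- R (v1 ⊗ v1)
    rw [RMat_K, bulletT_K T hsInv, cK (j+1), Km_mul, Km_mul,
      show ((j+1:ℕ):ℤ) + ((j+1:ℕ):ℤ) + -((j+1:ℕ):ℤ) = ((j+1:ℕ):ℤ) by ring,
      TensorProduct.tmul_smul, mul_comm j (j+1)]
  · -- R (v1 ⊗ v2)
    rw [RMat_xK, bulletT_K T hsInv, bulletT_xK T hsInv]
    simp only [show ((j:ℕ):ℤ) + 1 = ((j+1:ℕ):ℤ) by push_cast; ring]
    rw [cK (j+1), cK j, cxK j, sInv_xK T hsInv hq1 j hj, zero_smul, add_zero]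
    rw [show Km T (↑j) * Km T ↑(j+1) = Km T ((2*j+1:ℕ):ℤ) by
          rw [Km_mul]; congr 1; push_cast; ring]
    rw [show Km T ((2*j+1:ℕ):ℤ) * Km T (-↑j) = Km T ↑(j+1) by
          rw [Km_mul]; congr 1; push_cast; ring]
    rw [mul_neg, mul_smul_comm, KxK T (2*j+1) (-(j:ℤ)-1),
      show ((2*j+1:ℕ):ℤ) + (-(j:ℤ)-1) = ((j:ℕ):ℤ) by push_cast; ring]
    rw [smul_smul, ← pow_add, qpow_shift hq1 (ℓ - j + (2*j+1)) (j+1) (by omega)]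
    rw [xKK, xKK, show ((j:ℕ):ℤ) + ↑(j+1) + -↑(j+1) = ((j:ℕ):ℤ) by ring]
    rw [smul_neg, smul_smul, ← pow_add,
      show j*j + (j+1) = (j+1)*j + 1 by ring, mul_comm j (j+1)]
    rw [TensorProduct.tmul_smul, TensorProduct.tmul_add, TensorProduct.tmul_neg,
      TensorProduct.tmul_smul, TensorProduct.tmul_smul, sub_smul]
    abel
  · -- R (v2 ⊗ v1)
    rw [RMat_K, bulletT_K T hsInv, cK (j+1), KxK T (j+1) (j:ℤ), smul_mul_assoc, xKK,
      show ((j+1:ℕ):ℤ) + ↑j + -↑(j+1) = ((j:ℕ):ℤ) by push_cast; ring,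
      smul_smul, ← pow_add, show j*(j+1) + (j+1) = (j+1)*(j+1) by ring,
      TensorProduct.tmul_smul]
  · -- R (v2 ⊗ v2)
    rw [RMat_xK, bulletT_K T hsInv, bulletT_xK T hsInv]
    simp only [show ((j:ℕ):ℤ) + 1 = ((j+1:ℕ):ℤ) by push_cast; ring]
    rw [cK (j+1), cK j, cxK j, sInv_xK T hsInv hq1 j hj, zero_smul, add_zero]
    rw [KxK T j (j:ℤ), smul_mul_assoc, xKK,
      show ((j:ℕ):ℤ) + ↑j + -↑j = ((j:ℕ):ℤ) by ring]
    -- first summand now q^(j*j) • (q^j • (v2 ⊗ ... )) handled at end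
    rw [show ((j:ℕ):ℤ) + ↑j = ((2*j:ℕ):ℤ) by push_cast; ring]
    rw [mul_neg, smul_mul_assoc, mul_smul_comm, xKxK T (2*j) (-(j:ℤ)-1),
      show ((2*j:ℕ):ℤ) + (-(j:ℤ)-1) = ((j:ℤ)-1) by push_cast; ring]
    rw [xKxK T j (j:ℤ), smul_mul_assoc, mul_assoc (xg T * xg T), Km_mul,
      show ((j:ℕ):ℤ) + ↑j + -↑(j+1) = ((j:ℤ)-1) by push_cast; ring]
    simp only [smul_neg, smul_smul, ← pow_add]
    rw [qpow_shift hq1 (j*j + (j + (ℓ - j + 2*j))) (j*j + 2*j)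
      (by generalize j*j = s; omega)]
    rw [show j*(j+1) + j = j*j + 2*j by ring, neg_add_cancel,
      TensorProduct.tmul_zero, add_zero,
      show j*j + j = (j+1)*j by ring, TensorProduct.tmul_smul]

end Stmt17Aux
namespace Stmt17Aux
variable {k : Type*} [Field k] {A : Type*} [Ring A] [HopfAlgebra k A]
variable {ℓ : ℕ} {q : k} (T : TaftPresentation k A 1 ℓ q q)
variable {sInv : A →ₗ[k] A} {b : Module.Basis ((Fin 1 → Fin ℓ) × (Fin 1 → Fin ℓ)) k A}

lemma b_K' (hb : ∀ p, b p = T.mono p.1 p.2) (hℓ : 1 < ℓ) (r : ℕ) (hr : r < ℓ) :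
    b ((fun _ => (⟨0, by omega⟩ : Fin ℓ)), (fun _ => (⟨r, hr⟩ : Fin ℓ))) = Km T r := by
  rw [hb, TaftPresentation.mono, xpow_zero' T hℓ, one_mul]
  rfl

lemma b_xK' (hb : ∀ p, b p = T.mono p.1 p.2) (hℓ : 1 < ℓ) (r : ℕ) (hr : r < ℓ) :
    b ((fun _ => (⟨1, hℓ⟩ : Fin ℓ)), (fun _ => (⟨r, hr⟩ : Fin ℓ))) = xg T * Km T r := by
  rw [hb, TaftPresentation.mono]
  have : xpow T.x (fun i => (((fun _ => (⟨1, hℓ⟩ : Fin ℓ)) : Fin 1 → Fin ℓ) i : ℕ)) = xg T := by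
    simp [xpow, List.finRange, xg]
  rw [this]
  rfl

lemma coeff_zero (hb : ∀ p, b p = T.mono p.1 p.2) (hℓ : 1 < ℓ) {r1 r2 : ℕ}
    (h1 : r1 < ℓ) (h2 : r2 < ℓ) (s t u : k)
    (h : s • ((xg T * Km T r2) ⊗ₜ[k] Km T r1) + t • (Km T r1 ⊗ₜ[k] (xg T * Km T r2))
        = u • (Km T r1 ⊗ₜ[k] (xg T * Km T r2))) : s = 0 := by
  set p1 : (Fin 1 → Fin ℓ) × (Fin 1 → Fin ℓ) :=
    ((fun _ => (⟨0, by omega⟩ : Fin ℓ)), (fun _ => (⟨r1, h1⟩ : Fin ℓ))) with hp1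
  set p2 : (Fin 1 → Fin ℓ) × (Fin 1 → Fin ℓ) :=
    ((fun _ => (⟨1, hℓ⟩ : Fin ℓ)), (fun _ => (⟨r2, h2⟩ : Fin ℓ))) with hp2
  have hne : p1 ≠ p2 := by
    intro hc
    have h0 := congrArg (fun p => ((p.1 0 : Fin ℓ) : ℕ)) hc
    simp [hp1, hp2] at h0
  rw [← b_K' T hb hℓ r1 h1, ← b_xK' T hb hℓ r2 h2] at h
  have hφ := congrArg ((TensorProduct.lid k k).toLinearMap ∘ₗ
      TensorProduct.map (b.coord p2) (b.coord p1)) h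
  simp only [map_add, map_smul, LinearMap.comp_apply, TensorProduct.map_tmul,
    LinearEquiv.coe_toLinearMap, TensorProduct.lid_tmul, Module.Basis.coord_apply,
    Module.Basis.repr_self, Finsupp.single_eq_same, Finsupp.single_eq_of_ne hne,
    Finsupp.single_eq_of_ne (Ne.symm hne), smul_eq_mul, mul_one, mul_zero,
    smul_zero, add_zero, one_smul, zero_add] at hφ
  simpa [← hp1, ← hp2, Finsupp.single_eq_of_ne hne, Finsupp.single_eq_of_ne (Ne.symm hne)] using hφ

lemma part2 (hq : IsPrimitiveRoot q ℓ) (hℓ : 1 < ℓ)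
    (hb : ∀ p, b p = T.mono p.1 p.2)
    (hsInv : ∀ a : A, sInv (HopfAlgebra.antipode (R := k) a) = a ∧
        HopfAlgebra.antipode (R := k) (sInv a) = a) :
    (Odd ℓ →
      letI i := (ℓ + 1) / 2
      letI χ : Module.Dual k A := kappaD T b (fun _ => i - 1)
      letI R := RMat sInv χ
      letI v1 : A := T.K (fun _ => (i : ℤ))
      letI v2 : A := T.x 0 * T.K (fun _ => (i : ℤ) - 1)
      letI c1 : k := q ^ ((ℓ * ℓ - 1) / 4)
      letI c2 : k := q ^ ((3 * (ℓ + 1) * (ℓ + 1)) / 4)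
      (∀ w ∈ ({v1, v2} : Set A), ∀ w' ∈ ({v1, v2} : Set A),
        R (R (w ⊗ₜ[k] w')) + (c2 - c1) • R (w ⊗ₜ[k] w')
          - (c1 * c2) • (w ⊗ₜ[k] w') = 0) ∧
      ¬(∀ w ∈ ({v1, v2} : Set A), ∀ w' ∈ ({v1, v2} : Set A),
          R (w ⊗ₜ[k] w') = c1 • (w ⊗ₜ[k] w')) ∧
      ¬(∀ w ∈ ({v1, v2} : Set A), ∀ w' ∈ ({v1, v2} : Set A),
          R (w ⊗ₜ[k] w') = -c2 • (w ⊗ₜ[k] w'))) := by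
  intro hodd
  obtain ⟨m, hm⟩ := hodd
  have hm' : ℓ = 2*m+1 := by omega
  have hm1 : 1 ≤ m := by omega
  have hq1 : q ^ ℓ = 1 := hq.pow_eq_one
  have hq0 : q ≠ 0 := by
    intro h
    rw [h, zero_pow (by omega : ℓ ≠ 0)] at hq1
    exact zero_ne_one hq1
  have hi : (ℓ+1)/2 = m+1 := by omega
  have he1 : (ℓ*ℓ-1)/4 = (m+1)*m := by
    have h2 : ℓ*ℓ = 4*((m+1)*m)+1 := by subst hm'; ring
    omega
  have he2 : (3*(ℓ+1)*(ℓ+1))/4 = 3*((m+1)*(m+1)) := by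
    have h2 : 3*(ℓ+1)*(ℓ+1) = 4*(3*((m+1)*(m+1))) := by subst hm'; ring
    omega
  have hc2 : q^(3*((m+1)*(m+1))) = q^((m+1)*m+1) := by
    have h2 : 3*((m+1)*(m+1)) = ℓ*(m+2) + ((m+1)*m+1) := by subst hm'; ring
    rw [h2, pow_add, pow_mul, hq1, one_pow, one_mul]
  obtain ⟨h11, h12, h21, h22⟩ := part1 T hq1 hℓ hb hsInv (m+1) (by omega) (by omega)
  simp only [Nat.add_sub_cancel] at h11 h12 h21 h22
  simp only [hi, he1, he2, hc2, Nat.add_sub_cancel]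
  refine ⟨?_, ?_, ?_⟩
  · rintro w hw w' hw'
    simp only [Set.mem_insert_iff, Set.mem_singleton_iff] at hw hw'
    rcases hw with rfl | rfl <;> rcases hw' with rfl | rfl <;>
      simp only [h11, h12, h21, h22, map_add, map_smul, smul_add, smul_smul] <;>
      module
  · intro hcon
    have h := hcon (T.K (fun _ => ((m+1:ℕ) : ℤ))) (by left; rfl)
      (T.x 0 * T.K (fun _ => ((m+1:ℕ) : ℤ) - 1)) (by right; rfl)
    rw [h12] at h
    simp only [Km_def, xg_def, show ((m+1:ℕ):ℤ) - 1 = ((m:ℕ):ℤ) by push_cast; ring] at h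
    have hz := coeff_zero T hb hℓ (by omega : m+1 < ℓ) (by omega : m < ℓ) _ _ _ h
    exact hq0 ((pow_eq_zero_iff (Nat.mul_ne_zero (by omega) (by omega))).mp hz)
  · intro hcon
    have h := hcon (T.K (fun _ => ((m+1:ℕ) : ℤ))) (by left; rfl)
      (T.x 0 * T.K (fun _ => ((m+1:ℕ) : ℤ) - 1)) (by right; rfl)
    rw [h12] at h
    simp only [Km_def, xg_def, show ((m+1:ℕ):ℤ) - 1 = ((m:ℕ):ℤ) by push_cast; ring] at h
    have hz := coeff_zero T hb hℓ (by omega : m+1 < ℓ) (by omega : m < ℓ) _ _ _ h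
    exact hq0 ((pow_eq_zero_iff (Nat.mul_ne_zero (by omega) (by omega))).mp hz)

end Stmt17Aux

/-- for the Taft algebra (`n = 1`) and its two-dimensional simple
`D(T_ℓ)`-module `𝒜̄_{(i-1)ε₁, iε₁}` with basis `{K(iε₁), x₁K((i-1)ε₁)}`, the
braiding `R`-matrix is the stated `4×4` matrix; for `ℓ` odd and `i = (ℓ+1)/2`
its minimal polynomial is `(X - q^{-1/4})(X + q^{3/4})`, `q^{1/4} := q^{(ℓ+1)²/4}`. -/
theorem stmt17 [CharZero k] [IsAlgClosed k] {ℓ : ℕ} {q : k}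
    (hq : IsPrimitiveRoot q ℓ) (hℓ : 1 < ℓ)
    (T : TaftPresentation k A 1 ℓ q q)
    (b : Module.Basis ((Fin 1 → Fin ℓ) × (Fin 1 → Fin ℓ)) k A)
    (hb : ∀ p, b p = T.mono p.1 p.2)
    (sInv : A →ₗ[k] A)
    (hsInv : ∀ a : A, sInv (HopfAlgebra.antipode (R := k) a) = a ∧
        HopfAlgebra.antipode (R := k) (sInv a) = a) :
    (∀ i : ℕ, 1 ≤ i → i ≤ ℓ →
      letI χ : Module.Dual k A := kappaD T b (fun _ => i - 1)
      letI R := RMat sInv χ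
      letI v1 : A := T.K (fun _ => (i : ℤ))
      letI v2 : A := T.x 0 * T.K (fun _ => (i : ℤ) - 1)
      R (v1 ⊗ₜ[k] v1) = q ^ (i * (i - 1)) • (v1 ⊗ₜ[k] v1) ∧
      R (v1 ⊗ₜ[k] v2) = q ^ ((i - 1) * (i - 1)) • (v2 ⊗ₜ[k] v1)
          + (q ^ (i * (i - 1)) - q ^ (i * (i - 1) + 1)) • (v1 ⊗ₜ[k] v2) ∧
      R (v2 ⊗ₜ[k] v1) = q ^ (i * i) • (v1 ⊗ₜ[k] v2) ∧
      R (v2 ⊗ₜ[k] v2) = q ^ (i * (i - 1)) • (v2 ⊗ₜ[k] v2)) ∧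
    (Odd ℓ →
      letI i := (ℓ + 1) / 2
      letI χ : Module.Dual k A := kappaD T b (fun _ => i - 1)
      letI R := RMat sInv χ
      letI v1 : A := T.K (fun _ => (i : ℤ))
      letI v2 : A := T.x 0 * T.K (fun _ => (i : ℤ) - 1)
      letI c1 : k := q ^ ((ℓ * ℓ - 1) / 4)           -- `q^{-1/4}`
      letI c2 : k := q ^ ((3 * (ℓ + 1) * (ℓ + 1)) / 4) -- `q^{3/4}`
      (∀ w ∈ ({v1, v2} : Set A), ∀ w' ∈ ({v1, v2} : Set A),
        R (R (w ⊗ₜ[k] w')) + (c2 - c1) • R (w ⊗ₜ[k] w')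
          - (c1 * c2) • (w ⊗ₜ[k] w') = 0) ∧
      ¬(∀ w ∈ ({v1, v2} : Set A), ∀ w' ∈ ({v1, v2} : Set A),
          R (w ⊗ₜ[k] w') = c1 • (w ⊗ₜ[k] w')) ∧
      ¬(∀ w ∈ ({v1, v2} : Set A), ∀ w' ∈ ({v1, v2} : Set A),
          R (w ⊗ₜ[k] w') = -c2 • (w ⊗ₜ[k] w'))) := by
  exact ⟨Stmt17Aux.part1 T hq.pow_eq_one hℓ hb hsInv, Stmt17Aux.part2 T hq hℓ hb hsInv⟩
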